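/- Suppose a discrete group G acts on a row-finite, finitely aligned multitree E with no sources, with all vertex stabilisers infinite cyclic. For a finite path α = e_1⋯e_n in Γ = G\E and any lift α′ in E, an element m·1_{r(α′)} of the stabiliser G_{r(α′)} ≅ ℤ fixes α′ if and only if ⟨q(α_{k−1})/ω_{e_k}⟩ divides m for all 1 ≤ k ≤ n, where ⟨·⟩ denotes the least positive denominator of a rational number. Moreover, in that case m·q(α) is an integer and m·1_{r(α′)} = ±(m·q(α))·1_{s(α′)}. -/

import Mathlib

/-- A directed graph: vertices, edges, and range/source maps. -/
structure DirGraph where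
  V : Type
  E : Type
  r : E → V
  s : E → V

namespace DirGraph

/-- `G.IsDPath v w p` : `p` is a directed path from `w` to `v`, i.e. a (possibly empty)
composable sequence of edges with range `v` and source `w`. -/
def IsDPath (G : DirGraph) : G.V → G.V → List G.E → Prop
  | v, w, [] => v = w
  | v, w, e :: p => G.r e = v ∧ G.IsDPath (G.s e) w p

/-- The relation `v ≤ w` : there is a directed path from `w` to `v`. -/
def Le (G : DirGraph) (v w : G.V) : Prop := ∃ p, G.IsDPath v w p

/-- A multitree: there is at most one directed path between any two vertices. -/
def IsMultitree (G : DirGraph) : Prop :=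
  ∀ v w p q, G.IsDPath v w p → G.IsDPath v w q → p = q

/-- Row-finite: every vertex receives finitely many edges. -/
def RowFinite (G : DirGraph) : Prop := ∀ v, {e : G.E | G.r e = v}.Finite

/-- No sources: every vertex receives at least one edge. -/
def NoSources (G : DirGraph) : Prop := ∀ v, ∃ e, G.r e = v

/-- The set of minimal common upper bounds of `v` and `w`. -/
def mub (G : DirGraph) (v w : G.V) : Set G.V :=
  {u | G.Le v u ∧ G.Le w u ∧ ∀ u', G.Le v u' → G.Le w u' → G.Le u' u → u' = u}

/-- Finitely aligned: any two vertices have finitely many minimal common upper bounds. -/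
def FinAligned (G : DirGraph) : Prop := ∀ v w, (G.mub v w).Finite

/-- Infinite (directed) paths in `G`. -/
def InfPath (G : DirGraph) := {l : ℕ → G.E // ∀ n, G.s (l n) = G.r (l (n + 1))}

/-- Shift-tail equivalence of infinite paths. -/
def stEquiv (G : DirGraph) (a b : G.InfPath) : Prop :=
  ∃ m n : ℕ, ∀ k, a.1 (m + k) = b.1 (n + k)

/-- The boundary `∂G`: shift-tail equivalence classes of infinite paths. -/
def Bdry (G : DirGraph) := Quot G.stEquiv

/-- The cylinder set `Z_∂(v) ⊆ ∂G` of boundary classes of infinite paths with range `v`. -/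
def Zb (G : DirGraph) (v : G.V) : Set G.Bdry :=
  {x | ∃ l : G.InfPath, G.r (l.1 0) = v ∧ Quot.mk G.stEquiv l = x}

/-- The cylinder-set topology on the boundary `∂G`. -/
def bdryTop (G : DirGraph) : TopologicalSpace G.Bdry :=
  TopologicalSpace.generateFrom {S | ∃ v, S = G.Zb v}

/-- The cylinder set `Z(v) ⊆ Ω = G.V ⊕ ∂G`: vertices `w` with a path from `w` to `v`,
together with boundary classes of infinite paths through `v`. -/
def Zfull (G : DirGraph) (v : G.V) : Set (G.V ⊕ G.Bdry) :=
  {x | Sum.elim (fun w => G.Le v w) (fun b => b ∈ G.Zb v) x}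

end DirGraph

namespace DirGraph

variable {Γgrp : Type} [Group Γgrp]

/-- The quotient directed graph `G\E` of a graph action: vertices and edges are the
orbits of vertices and edges. -/
def quotGraph (Γgrp : Type) [Group Γgrp] (E : DirGraph)
    [MulAction Γgrp E.V] [MulAction Γgrp E.E]
    (hr : ∀ (g : Γgrp) (e : E.E), E.r (g • e) = g • E.r e)
    (hs : ∀ (g : Γgrp) (e : E.E), E.s (g • e) = g • E.s e) : DirGraph where
  V := Quotient (MulAction.orbitRel Γgrp E.V)
  E := Quotient (MulAction.orbitRel Γgrp E.E)
  r := Quotient.map E.r (by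
    intro a b hab
    obtain ⟨g, hg⟩ := hab
    exact ⟨g, by simp only [← hr, hg]⟩)
  s := Quotient.map E.s (by
    intro a b hab
    obtain ⟨g, hg⟩ := hab
    exact ⟨g, by simp only [← hs, hg]⟩)

/-- The induced action of a group element on infinite paths. -/
def actInf (E : DirGraph) [MulAction Γgrp E.V] [MulAction Γgrp E.E]
    (hr : ∀ (g : Γgrp) (e : E.E), E.r (g • e) = g • E.r e)
    (hs : ∀ (g : Γgrp) (e : E.E), E.s (g • e) = g • E.s e)
    (g : Γgrp) (l : E.InfPath) : E.InfPath :=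
  ⟨fun n => g • l.1 n, fun n => by rw [hs, hr, l.2 n]⟩

/-- The induced action of a group element on the boundary `∂E`. -/
def actBdry (E : DirGraph) [MulAction Γgrp E.V] [MulAction Γgrp E.E]
    (hr : ∀ (g : Γgrp) (e : E.E), E.r (g • e) = g • E.r e)
    (hs : ∀ (g : Γgrp) (e : E.E), E.s (g • e) = g • E.s e)
    (g : Γgrp) : E.Bdry → E.Bdry :=
  Quot.map (E.actInf hr hs g) (by
    rintro a b ⟨m, n, h⟩
    exact ⟨m, n, fun k => by simp only [actInf, h k]⟩)

end DirGraph

/-- The signed index ratio `q(α) = ∏ ω_{ē_i}/ω_{e_i}` of a finite path. -/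
def qratio {E : DirGraph} (ω ωb : E.E → ℤ) (p : List E.E) : ℚ :=
  (p.map fun e => (ωb e : ℚ) / (ω e : ℚ)).prod

lemma den_dvd_iff' (x : ℚ) (m : ℤ) : ((x.den : ℤ) ∣ m) ↔ ((m : ℚ) * x).den = 1 := by
  constructor
  · rintro ⟨t, rfl⟩
    have h : (((x.den * t : ℤ)) : ℚ) * x = ((t * x.num : ℤ) : ℚ) := by
      push_cast
      rw [mul_comm ((x.den:ℚ)) (t:ℚ), mul_assoc, Rat.den_mul_eq_num]
    rw [h, Rat.den_intCast]
  · intro h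
    have hq : ((m:ℚ) * x) = (((m:ℚ)*x).num : ℚ) := ((Rat.den_eq_one_iff _).mp h).symm
    set z := ((m:ℚ)*x).num with hz
    have key : m * x.num = z * x.den := by
      have : (m:ℚ) * x.num = (z:ℚ) * x.den := by
        rw [show (x.num:ℚ) = x * x.den from (Rat.mul_den_eq_num x).symm,
          ← mul_assoc, hq]
      exact_mod_cast this
    have hdvd : (x.den:ℤ) ∣ x.num * m := ⟨z, by linarith⟩
    refine Int.dvd_of_dvd_mul_right_of_gcd_one hdvd ?_
    simpa [Int.gcd, Nat.coprime_comm] using x.reduced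

lemma qratio_nil {E : DirGraph} (ω ωb : E.E → ℤ) : qratio ω ωb [] = 1 := rfl

lemma qratio_cons {E : DirGraph} (ω ωb : E.E → ℤ) (e : E.E) (p : List E.E) :
    qratio ω ωb (e :: p) = ((ωb e : ℚ) / (ω e : ℚ)) * qratio ω ωb p := by
  simp [qratio]

open DirGraph in
/-- With all vertex stabilisers infinite cyclic (with chosen generators `gen`), edge
stabilisers generated by `genE`, and `ω, ω̄` recording the embeddings of the edge
stabilisers into range- and source-vertex stabilisers: an element `gen (r α')^m` fixes
the path `α'` iff `⟨q(α'_{k-1})/ω_{e_k}⟩ ∣ m` for all `k`, and in that case `m·q(α')`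
is an integer and `gen (r α')^m = gen (s α')^{±m·q(α')}`. -/
theorem stmt16 (Γgrp : Type) [Group Γgrp] [Countable Γgrp]
    (E : DirGraph) [Countable E.V] [Countable E.E]
    [MulAction Γgrp E.V] [MulAction Γgrp E.E]
    (hr : ∀ (g : Γgrp) (e : E.E), E.r (g • e) = g • E.r e)
    (hs : ∀ (g : Γgrp) (e : E.E), E.s (g • e) = g • E.s e)
    (hmt : E.IsMultitree) (hrow : E.RowFinite) (hnsrc : E.NoSources)
    (hfa : E.FinAligned)
    (gen : E.V → Γgrp)
    (hgen : ∀ v, Subgroup.zpowers (gen v) = MulAction.stabilizer Γgrp v)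
    (hgeninf : ∀ v, ¬ IsOfFinOrder (gen v))
    (genE : E.E → Γgrp)
    (hgenE : ∀ e, Subgroup.zpowers (genE e) = MulAction.stabilizer Γgrp e)
    (ω ωb : E.E → ℤ)
    (hω : ∀ e, genE e = gen (E.r e) ^ (ω e))
    (hωb : ∀ e, genE e = gen (E.s e) ^ (ωb e))
    (v w : E.V) (p : List E.E) (hp : E.IsDPath v w p) (m : ℤ) :
    ((∀ e ∈ p, (gen v ^ m) • e = e) ↔
      ∀ k : Fin p.length,
        (((qratio ω ωb (p.take (k : ℕ)) / (ω (p.get k) : ℚ)).den : ℤ) ∣ m)) ∧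
    ((∀ e ∈ p, (gen v ^ m) • e = e) →
      ((m : ℚ) * qratio ω ωb p).den = 1 ∧
        (gen v ^ m = gen w ^ (((m : ℚ) * qratio ω ωb p).num) ∨
          gen v ^ m = gen w ^ (-((m : ℚ) * qratio ω ωb p).num))) := by

  classical
  -- injectivity of zpow for each vertex generator
  have hinj : ∀ u : E.V, Function.Injective fun n : ℤ => gen u ^ n :=
    fun u => injective_zpow_iff_not_isOfFinOrder.mpr (hgeninf u)
  -- each vertex generator power fixes the vertex
  have hfixv : ∀ (u : E.V) (n : ℤ), gen u ^ n • u = u := by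
    intro u n
    have h1 : gen u ∈ MulAction.stabilizer Γgrp u := by
      rw [← hgen u]; exact Subgroup.mem_zpowers _
    exact (Subgroup.zpow_mem _ h1 n : gen u ^ n ∈ MulAction.stabilizer Γgrp u)
  -- stabiliser membership for edges
  have hstabE : ∀ (e : E.E) (g : Γgrp), g • e = e ↔ ∃ t : ℤ, g = genE e ^ t := by
    intro e g
    constructor
    · intro hg
      have : g ∈ MulAction.stabilizer Γgrp e := hg
      rw [← hgenE e] at this
      obtain ⟨t, ht⟩ := Subgroup.mem_zpowers_iff.mp this
      exact ⟨t, ht.symm⟩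
    · rintro ⟨t, rfl⟩
      have h1 : genE e ∈ MulAction.stabilizer Γgrp e := by
        rw [← hgenE e]; exact Subgroup.mem_zpowers _
      exact (Subgroup.zpow_mem _ h1 t : genE e ^ t ∈ MulAction.stabilizer Γgrp e)
  -- ω never vanishes
  have hωne : ∀ e : E.E, ω e ≠ 0 := by
    intro e
    have hmem : ∀ n : ℤ, (fun n : ℤ => gen (E.r e) ^ n • e) n ∈ {e' : E.E | E.r e' = E.r e} := by
      intro n
      simp only [Set.mem_setOf_eq, hr]
      exact hfixv (E.r e) n
    have hni : ¬ Function.Injective fun n : ℤ => gen (E.r e) ^ n • e := by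
      intro hi
      exact (Set.infinite_of_injective_forall_mem hi hmem) (hrow (E.r e))
    obtain ⟨a, b, hab, hne⟩ := Function.not_injective_iff.mp hni
    have he : gen (E.r e) ^ (b - a) • e = e := by
      have h2 : gen (E.r e) ^ (b - a) • e = gen (E.r e) ^ (-a) • gen (E.r e) ^ b • e := by
        rw [← mul_smul, ← zpow_add, show -a + b = b - a by ring]
      rw [h2, ← hab, ← mul_smul, ← zpow_add, show -a + a = 0 by ring, zpow_zero, one_smul]
    obtain ⟨t, ht⟩ := (hstabE e _).mp he
    rw [hω e, ← zpow_mul] at ht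
    have := hinj (E.r e) ht
    intro h0
    rw [h0, zero_mul] at this
    exact hne (by linarith)
  -- ωb never vanishes
  have hωbne : ∀ e : E.E, ωb e ≠ 0 := by
    intro e h0
    have h1 : genE e = 1 := by rw [hωb e, h0, zpow_zero]
    have h2 : gen (E.r e) ^ (ω e) = gen (E.r e) ^ (0 : ℤ) := by
      rw [← hω e, h1, zpow_zero]
    exact hωne e (hinj (E.r e) h2)
  -- edge fixing lemma
  have hedge : ∀ (e : E.E) (m : ℤ),
      (gen (E.r e) ^ m • e = e ↔ ω e ∣ m) ∧
      (∀ t : ℤ, m = ω e * t → gen (E.r e) ^ m = gen (E.s e) ^ (t * ωb e)) := by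
    intro e m
    have hpow : ∀ t : ℤ, gen (E.r e) ^ (ω e * t) = genE e ^ t := by
      intro t; rw [hω e, ← zpow_mul]
    constructor
    · constructor
      · intro hfe
        obtain ⟨t, ht⟩ := (hstabE e _).mp hfe
        rw [hω e, ← zpow_mul] at ht
        exact ⟨t, hinj (E.r e) ht⟩
      · rintro ⟨t, rfl⟩
        exact (hstabE e _).mpr ⟨t, hpow t⟩
    · rintro t rfl
      rw [hpow t, hωb e, ← zpow_mul, mul_comm]
  clear hfa hnsrc hmt hs
  -- main induction on the path
  induction p generalizing v m with
  | nil =>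
    cases hp
    refine ⟨⟨fun _ k => absurd k.2 (by simp), fun _ e he => absurd he (by simp)⟩, fun _ => ?_⟩
    rw [qratio_nil, mul_one]
    exact ⟨Rat.den_intCast m, Or.inl (by rw [Rat.num_intCast])⟩
  | cons e p' IH =>
    obtain ⟨hre, hp'⟩ := hp
    subst hre
    -- the k = 0 condition is equivalent to ω e ∣ m
    have hzero : ∀ h0, ((((qratio ω ωb ((e :: p').take (0:ℕ)) /
        (ω ((e :: p').get ⟨0, h0⟩) : ℚ)).den : ℤ)) ∣ m) ↔ ω e ∣ m := by
      intro h0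
      rw [den_dvd_iff']
      show ((m : ℚ) * (qratio ω ωb [] / (ω e : ℚ))).den = 1 ↔ _
      rw [qratio_nil, mul_one_div]
      exact Rat.den_div_intCast_eq_one_iff m (ω e) (hωne e)
    constructor
    · -- the iff
      constructor
      · intro hL
        have hfe : gen (E.r e) ^ m • e = e := hL e List.mem_cons_self
        have hdvd : ω e ∣ m := ((hedge e m).1).mp hfe
        obtain ⟨t, hmt⟩ := hdvd
        have hEq : gen (E.r e) ^ m = gen (E.s e) ^ (t * ωb e) := (hedge e m).2 t hmt
        have hcast : ((t * ωb e : ℤ) : ℚ) = (m : ℚ) * ((ωb e : ℚ) / (ω e : ℚ)) := by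
          have hω0 : ((ω e : ℚ)) ≠ 0 := Int.cast_ne_zero.mpr (hωne e)
          rw [hmt]; push_cast; field_simp
        have hL' : ∀ x ∈ p', gen (E.s e) ^ (t * ωb e) • x = x := by
          intro x hx
          rw [← hEq]
          exact hL x (List.mem_cons_of_mem e hx)
        have hIH := ((IH (E.s e) hp' (t * ωb e)).1).mp hL'
        intro k
        obtain ⟨j, hj⟩ := k
        match j, hj with
        | 0, hj => exact (hzero hj).mpr ⟨t, hmt⟩
        | (j+1), hj =>
          have hj' : j < p'.length := by simpa using hj
          have hget : (e :: p').get ⟨j+1, hj⟩ = p'.get ⟨j, hj'⟩ := rfl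
          have htake : (e :: p').take (j+1) = e :: p'.take j := rfl
          rw [den_dvd_iff', hget, htake, qratio_cons]
          have hIHj := hIH ⟨j, hj'⟩
          rw [den_dvd_iff'] at hIHj
          have : (m : ℚ) * ((ωb e : ℚ) / (ω e : ℚ) * qratio ω ωb (p'.take j) /
              (ω (p'.get ⟨j, hj'⟩) : ℚ)) =
              ((t * ωb e : ℤ) : ℚ) * (qratio ω ωb (p'.take j) / (ω (p'.get ⟨j, hj'⟩) : ℚ)) := by
            rw [hcast]; ring
          rw [this]
          exact hIHj
      · intro hR
        have hdvd : ω e ∣ m := (hzero (by simp)).mp (hR ⟨0, by simp⟩)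
        obtain ⟨t, hmt⟩ := hdvd
        have hEq : gen (E.r e) ^ m = gen (E.s e) ^ (t * ωb e) := (hedge e m).2 t hmt
        have hcast : ((t * ωb e : ℤ) : ℚ) = (m : ℚ) * ((ωb e : ℚ) / (ω e : ℚ)) := by
          have hω0 : ((ω e : ℚ)) ≠ 0 := Int.cast_ne_zero.mpr (hωne e)
          rw [hmt]; push_cast; field_simp
        have hR' : ∀ k : Fin p'.length,
            (((qratio ω ωb (p'.take (k : ℕ)) / (ω (p'.get k) : ℚ)).den : ℤ)) ∣ (t * ωb e) := by
          rintro ⟨j, hj'⟩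
          have hj : j + 1 < (e :: p').length := by simpa using hj'
          have hRj := hR ⟨j+1, hj⟩
          have hget : (e :: p').get ⟨j+1, hj⟩ = p'.get ⟨j, hj'⟩ := rfl
          have htake : (e :: p').take (j+1) = e :: p'.take j := rfl
          rw [den_dvd_iff', hget, htake, qratio_cons] at hRj
          rw [den_dvd_iff']
          have : (m : ℚ) * ((ωb e : ℚ) / (ω e : ℚ) * qratio ω ωb (p'.take j) /
              (ω (p'.get ⟨j, hj'⟩) : ℚ)) =
              ((t * ωb e : ℤ) : ℚ) * (qratio ω ωb (p'.take j) / (ω (p'.get ⟨j, hj'⟩) : ℚ)) := by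
            rw [hcast]; ring
          rwa [this] at hRj
        have hL' := ((IH (E.s e) hp' (t * ωb e)).1).mpr hR'
        intro x hx
        rcases List.mem_cons.mp hx with rfl | hx'
        · exact ((hedge x m).1).mpr ⟨t, hmt⟩
        · rw [hEq]; exact hL' x hx'
    · -- the consequence
      intro hL
      have hfe : gen (E.r e) ^ m • e = e := hL e List.mem_cons_self
      obtain ⟨t, hmt⟩ := ((hedge e m).1).mp hfe
      have hEq : gen (E.r e) ^ m = gen (E.s e) ^ (t * ωb e) := (hedge e m).2 t hmt
      have hcast : ((t * ωb e : ℤ) : ℚ) = (m : ℚ) * ((ωb e : ℚ) / (ω e : ℚ)) := by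
        have hω0 : ((ω e : ℚ)) ≠ 0 := Int.cast_ne_zero.mpr (hωne e)
        rw [hmt]; push_cast; field_simp
      have hL' : ∀ x ∈ p', gen (E.s e) ^ (t * ωb e) • x = x := by
        intro x hx
        rw [← hEq]
        exact hL x (List.mem_cons_of_mem e hx)
      obtain ⟨hden, hnum⟩ := (IH (E.s e) hp' (t * ωb e)).2 hL'
      have hqq : (m : ℚ) * qratio ω ωb (e :: p') =
          ((t * ωb e : ℤ) : ℚ) * qratio ω ωb p' := by
        rw [qratio_cons, hcast]; ring
      rw [hqq]
      refine ⟨hden, ?_⟩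
      rcases hnum with h | h
      · exact Or.inl (hEq.trans h)
      · exact Or.inr (hEq.trans h)
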